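/- For every positive integer d, every c > 0 and every p ∈ (0,1) the following holds. Let H be a d-uniform hypergraph on a finite vertex set. Then either H has a subhypergraph H′ ⊆ H with branching factor c/p such that hit_p(H′) ≥ hit_p(H)/(d+1), or there exist an integer 1 ≤ r ≤ d, a (d−r)-uniform hypergraph I, and a subhypergraph H′ ⊆ H such that: (1) every e ∈ I has at least (c/p)^r extensions in H′; (2) for every e ∈ I and every nonempty set A disjoint from e, the set e ∪ A has at most (c/p)^{r−|A|} extensions in H′; and (3) hit_p(I) ≥ hit_p(H)/(d+1). -/

import Mathlib

open Finset

/-- `hitp V p H = Pr_{S ∼ µ_p}[H|_S ≠ ∅]`, where `µ_p` puts each vertex of `V`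
in `S` independently with probability `p`, and `H|_S = {e ∈ H : e ⊆ S}`. -/
def hitp (V : Type) [Fintype V] [DecidableEq V] (p : ℝ) (H : Finset (Finset V)) : ℝ :=
  ∑ S : Finset V,
    if (H.filter (fun e => e ⊆ S)).Nonempty then
      p ^ S.card * (1 - p) ^ (Fintype.card V - S.card)
    else 0

/-- `H` has branching factor `ρ`: for every `A` and `r ≥ 0`, the number of
hyperedges `e ∈ H` with `e ⊇ A` and `|e| = |A| + r` is at most `ρ^r`. -/
def branching (V : Type) [DecidableEq V] (H : Finset (Finset V)) (ρ : ℝ) : Prop :=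
  ∀ (A : Finset V) (r : ℕ),
    ((H.filter (fun e => A ⊆ e ∧ e.card = A.card + r)).card : ℝ) ≤ ρ ^ r

section Aux

open scoped Classical

variable (V : Type) [Fintype V] [DecidableEq V]

/-- The cores at level `r` relative to a hypergraph `G`: sets of size `d - r`
with at least `ρ^r` extensions in `G`. -/
noncomputable def ICore (d r : ℕ) (ρ : ℝ) (G : Finset (Finset V)) : Finset (Finset V) :=
  Finset.univ.filter
    (fun B => B.card = d - r ∧ ρ ^ r ≤ ((G.filter (fun e => B ⊆ e)).card : ℝ))

/-- The surviving hypergraph after `r` levels of peeling. -/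
noncomputable def Glev (d : ℕ) (ρ : ℝ) (H : Finset (Finset V)) : ℕ → Finset (Finset V)
  | 0 => H
  | (r+1) => (Glev d ρ H r).filter
      (fun e => ∀ B ∈ ICore V d (r+1) ρ (Glev d ρ H r), ¬ B ⊆ e)

variable {V}

lemma mem_ICore {d r : ℕ} {ρ : ℝ} {G : Finset (Finset V)} {B : Finset V} :
    B ∈ ICore V d r ρ G ↔
      B.card = d - r ∧ ρ ^ r ≤ ((G.filter (fun e => B ⊆ e)).card : ℝ) := by
  simp [ICore]

lemma Glev_succ_subset {d : ℕ} {ρ : ℝ} {H : Finset (Finset V)} (r : ℕ) :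
    Glev V d ρ H (r+1) ⊆ Glev V d ρ H r := by
  rw [Glev]; exact Finset.filter_subset _ _

lemma Glev_mono {d : ℕ} {ρ : ℝ} {H : Finset (Finset V)} {s r : ℕ} (h : s ≤ r) :
    Glev V d ρ H r ⊆ Glev V d ρ H s := by
  induction r with
  | zero =>
      have hs : s = 0 := Nat.le_zero.mp h
      subst hs; exact Finset.Subset.refl _
  | succ n ih =>
      rcases Nat.lt_or_ge s (n+1) with h1 | h2
      · exact (Glev_succ_subset n).trans (ih (Nat.lt_succ_iff.mp h1))
      · have hs : s = n + 1 := le_antisymm h h2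
        subst hs; exact Finset.Subset.refl _

lemma Glev_zero {d : ℕ} {ρ : ℝ} {H : Finset (Finset V)} : Glev V d ρ H 0 = H := rfl

lemma Glev_subset {d : ℕ} {ρ : ℝ} {H : Finset (Finset V)} (r : ℕ) :
    Glev V d ρ H r ⊆ H := Glev_mono (Nat.zero_le r)

lemma ICore_block {d : ℕ} {ρ : ℝ} {H : Finset (Finset V)} {r : ℕ} {B e : Finset V}
    (hB : B ∈ ICore V d (r+1) ρ (Glev V d ρ H r)) (he : e ∈ Glev V d ρ H (r+1)) :
    ¬ B ⊆ e := by
  rw [Glev, Finset.mem_filter] at he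
  exact he.2 B hB

/-- If `B` is a core at level `r ≥ 1` then no surviving edge at any later level
contains `B`. -/
lemma ICore_block' {d : ℕ} {ρ : ℝ} {H : Finset (Finset V)} {r m : ℕ} (hr : 1 ≤ r)
    (hm : r ≤ m) {B e : Finset V}
    (hB : B ∈ ICore V d r ρ (Glev V d ρ H (r-1))) (he : e ∈ Glev V d ρ H m) :
    ¬ B ⊆ e := by
  obtain ⟨n, rfl⟩ : ∃ n, r = n + 1 := ⟨r - 1, by omega⟩
  have hB' : B ∈ ICore V d (n+1) ρ (Glev V d ρ H n) := by simpa using hB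
  exact ICore_block hB' (Glev_mono hm he)

lemma count_mono {G G' : Finset (Finset V)} (h : G' ⊆ G) (B : Finset V) :
    ((G'.filter (fun e => B ⊆ e)).card : ℝ) ≤ ((G.filter (fun e => B ⊆ e)).card : ℝ) := by
  exact_mod_cast Finset.card_le_card (Finset.filter_subset_filter _ h)

/-- Condition (2): supersets of a level-`r` core have few extensions. -/
lemma cond2 {d : ℕ} {ρ : ℝ} {H : Finset (Finset V)} (hρ : 0 < ρ)
    (hH : ∀ e ∈ H, e.card = d) {r : ℕ} (hr1 : 1 ≤ r) (hrd : r ≤ d)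
    {B : Finset V} (hB : B ∈ ICore V d r ρ (Glev V d ρ H (r-1)))
    {A : Finset V} (hA : A.Nonempty) (hdisj : Disjoint A B) :
    (((Glev V d ρ H (r-1)).filter (fun e' => B ∪ A ⊆ e')).card : ℝ) ≤
      ρ ^ ((r : ℤ) - (A.card : ℤ)) := by
  have hBcard : B.card = d - r := (mem_ICore.mp hB).1
  have hcardBA : (B ∪ A).card = (d - r) + A.card := by
    rw [Finset.card_union_of_disjoint hdisj.symm, hBcard]
  have hAcard : 1 ≤ A.card := Finset.card_pos.mpr hA
  rcases lt_trichotomy A.card r with hlt | heq | hgt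
  · -- A.card < r : the interesting case
    set s := A.card with hs
    set t := r - s with ht
    have ht1 : 1 ≤ t := by omega
    have htr : t ≤ r - 1 := by omega
    have hexp : (r : ℤ) - (s : ℤ) = (t : ℕ) := by push_cast; omega
    rw [hexp, zpow_natCast]
    by_contra hcon
    push_neg at hcon
    -- then B ∪ A is a core at level t
    have hsub : Glev V d ρ H (r-1) ⊆ Glev V d ρ H (t-1) := Glev_mono (by omega)
    have hcount : ρ ^ t ≤
        (((Glev V d ρ H (t-1)).filter (fun e => B ∪ A ⊆ e)).card : ℝ) :=
      le_trans hcon.le (count_mono hsub _)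
    have hcore : B ∪ A ∈ ICore V d t ρ (Glev V d ρ H (t-1)) := by
      rw [mem_ICore]
      exact ⟨by omega, hcount⟩
    -- hence no edge of Glev (r-1) contains B ∪ A
    have hempty : ((Glev V d ρ H (r-1)).filter (fun e' => B ∪ A ⊆ e')) = ∅ := by
      apply Finset.filter_eq_empty_iff.mpr
      intro e he
      exact ICore_block' ht1 (by omega) hcore (Glev_mono (show t ≤ r - 1 by omega) he)
    rw [hempty] at hcon
    simp at hcon
    exact absurd hcon.le (not_le.mpr (pow_pos hρ t))
  · -- A.card = r
    have hcard : (B ∪ A).card = d := by omega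
    have hexp : (r : ℤ) - (A.card : ℤ) = 0 := by omega
    rw [hexp, zpow_zero]
    have hsub : ((Glev V d ρ H (r-1)).filter (fun e' => B ∪ A ⊆ e')) ⊆ {B ∪ A} := by
      intro e he
      rw [Finset.mem_filter] at he
      have hed : e.card = d := hH e (Glev_subset _ he.1)
      rw [Finset.mem_singleton]
      exact (Finset.eq_of_subset_of_card_le he.2 (by omega)).symm
    calc (((Glev V d ρ H (r-1)).filter (fun e' => B ∪ A ⊆ e')).card : ℝ)
        ≤ (({B ∪ A} : Finset (Finset V)).card : ℝ) := by
          exact_mod_cast Finset.card_le_card hsub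
      _ = 1 := by simp
  · -- A.card > r : no edge can contain B ∪ A
    have hempty : ((Glev V d ρ H (r-1)).filter (fun e' => B ∪ A ⊆ e')) = ∅ := by
      apply Finset.filter_eq_empty_iff.mpr
      intro e he
      intro hsub
      have hed : e.card = d := hH e (Glev_subset _ he)
      have := Finset.card_le_card hsub
      omega
    rw [hempty]
    simp only [Finset.card_empty, Nat.cast_zero]
    exact le_of_lt (zpow_pos hρ _)

/-- The final surviving hypergraph has branching factor `ρ`. -/
lemma branching_Glev {d : ℕ} {ρ : ℝ} {H : Finset (Finset V)} (hρ : 0 < ρ)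
    (hH : ∀ e ∈ H, e.card = d) :
    branching V (Glev V d ρ H d) ρ := by
  intro A r'
  rcases Finset.eq_empty_or_nonempty
      ((Glev V d ρ H d).filter (fun e => A ⊆ e ∧ e.card = A.card + r')) with hemp | hne
  · rw [hemp]
    simp only [Finset.card_empty, Nat.cast_zero]
    exact le_of_lt (pow_pos hρ _)
  · obtain ⟨e, he⟩ := hne
    rw [Finset.mem_filter] at he
    obtain ⟨heG, hAe, hecard⟩ := he
    have hed : e.card = d := hH e (Glev_subset _ heG)
    have hAcard : A.card = d - r' := by omega
    have hr'd : r' ≤ d := by omega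
    rcases Nat.eq_zero_or_pos r' with hr0 | hr1
    · subst hr0
      have hsub : ((Glev V d ρ H d).filter (fun e => A ⊆ e ∧ e.card = A.card + 0)) ⊆ {A} := by
        intro f hf
        rw [Finset.mem_filter] at hf
        rw [Finset.mem_singleton]
        exact (Finset.eq_of_subset_of_card_le hf.2.1 (by omega)).symm
      calc (((Glev V d ρ H d).filter (fun e => A ⊆ e ∧ e.card = A.card + 0)).card : ℝ)
          ≤ (({A} : Finset (Finset V)).card : ℝ) := by
            exact_mod_cast Finset.card_le_card hsub
        _ = 1 := by simp
        _ ≤ ρ ^ 0 := by simp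
    · -- r' ≥ 1
      by_cases hheavy : ρ ^ r' ≤ (((Glev V d ρ H (r'-1)).filter (fun e => A ⊆ e)).card : ℝ)
      · -- A is a core at level r', so no surviving edge contains A: contradiction with e
        have hcore : A ∈ ICore V d r' ρ (Glev V d ρ H (r'-1)) :=
          mem_ICore.mpr ⟨hAcard, hheavy⟩
        exact absurd hAe (ICore_block' hr1 hr'd hcore heG)
      · push_neg at hheavy
        have hsub1 : ((Glev V d ρ H d).filter (fun e => A ⊆ e ∧ e.card = A.card + r')) ⊆
            ((Glev V d ρ H (r'-1)).filter (fun e => A ⊆ e)) := by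
          intro f hf
          rw [Finset.mem_filter] at hf ⊢
          exact ⟨Glev_mono (by omega) hf.1, hf.2.1⟩
        calc (((Glev V d ρ H d).filter (fun e => A ⊆ e ∧ e.card = A.card + r')).card : ℝ)
            ≤ (((Glev V d ρ H (r'-1)).filter (fun e => A ⊆ e)).card : ℝ) := by
              exact_mod_cast Finset.card_le_card hsub1
          _ ≤ ρ ^ r' := hheavy.le
lemma covering {d : ℕ} {ρ : ℝ} {H : Finset (Finset V)} {e : Finset V} (he : e ∈ H) (n : ℕ) :
    e ∈ Glev V d ρ H n ∨
      ∃ r, 1 ≤ r ∧ r ≤ n ∧ ∃ B ∈ ICore V d r ρ (Glev V d ρ H (r-1)), B ⊆ e := by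
  induction n with
  | zero => exact Or.inl he
  | succ m ih =>
      rcases ih with hmem | ⟨r, hr1, hrm, B, hB, hBe⟩
      · by_cases hmem' : e ∈ Glev V d ρ H (m+1)
        · exact Or.inl hmem'
        · right
          rw [Glev, Finset.mem_filter] at hmem'
          push_neg at hmem'
          obtain ⟨B, hB, hBe⟩ := hmem' hmem
          exact ⟨m+1, by omega, le_refl _, B, by simpa using hB, hBe⟩
      · exact Or.inr ⟨r, hr1, by omega, B, hB, hBe⟩

lemma hitp_term_nonneg {p : ℝ} (hp : p ∈ Set.Ioo (0:ℝ) 1) (K : Finset (Finset V))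
    (S : Finset V) :
    (0:ℝ) ≤ if (K.filter (fun e => e ⊆ S)).Nonempty then
      p ^ S.card * (1 - p) ^ (Fintype.card V - S.card) else 0 := by
  split
  · have h1 : (0:ℝ) ≤ p := le_of_lt hp.1
    have h2 : (0:ℝ) ≤ 1 - p := by linarith [hp.2]
    positivity
  · exact le_refl _

/-- Pointwise decomposition of the hitting indicator, then summed. -/
lemma hitp_decomp {d : ℕ} {ρ : ℝ} {p : ℝ} (hp : p ∈ Set.Ioo (0:ℝ) 1)
    {H : Finset (Finset V)} :
    hitp V p H ≤ hitp V p (Glev V d ρ H d) +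
      ∑ r ∈ Finset.Icc 1 d, hitp V p (ICore V d r ρ (Glev V d ρ H (r-1))) := by
  unfold hitp
  rw [Finset.sum_comm (s := Finset.Icc 1 d)]
  rw [← Finset.sum_add_distrib]
  apply Finset.sum_le_sum
  intro S _
  set w : ℝ := p ^ S.card * (1 - p) ^ (Fintype.card V - S.card) with hw
  have hw0 : 0 ≤ w := by
    have h1 : (0:ℝ) ≤ p := le_of_lt hp.1
    have h2 : (0:ℝ) ≤ 1 - p := by linarith [hp.2]
    positivity
  by_cases hne : (H.filter (fun e => e ⊆ S)).Nonempty
  · obtain ⟨e, he⟩ := hne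
    rw [Finset.mem_filter] at he
    obtain ⟨heH, heS⟩ := he
    rw [if_pos ⟨e, Finset.mem_filter.mpr ⟨heH, heS⟩⟩]
    rcases covering (d := d) (ρ := ρ) heH d with hmem | ⟨r, hr1, hrd, B, hB, hBe⟩
    · have h1 : (if ((Glev V d ρ H d).filter (fun e => e ⊆ S)).Nonempty then w else 0) = w := by
        rw [if_pos ⟨e, Finset.mem_filter.mpr ⟨hmem, heS⟩⟩]
      rw [h1]
      have h2 : (0:ℝ) ≤ ∑ r ∈ Finset.Icc 1 d,
          (if ((ICore V d r ρ (Glev V d ρ H (r-1))).filter (fun e => e ⊆ S)).Nonempty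
            then w else 0) := by
        apply Finset.sum_nonneg
        intro i _
        split
        · exact hw0
        · exact le_refl _
      linarith
    · have hBS : B ⊆ S := hBe.trans heS
      have h1 : (if ((ICore V d r ρ (Glev V d ρ H (r-1))).filter (fun e => e ⊆ S)).Nonempty
          then w else 0) = w := by
        rw [if_pos ⟨B, Finset.mem_filter.mpr ⟨hB, hBS⟩⟩]
      have h2 : w ≤ ∑ r ∈ Finset.Icc 1 d,
          (if ((ICore V d r ρ (Glev V d ρ H (r-1))).filter (fun e => e ⊆ S)).Nonempty
            then w else 0) := by
        have hs := Finset.single_le_sum (f := fun r =>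
          (if ((ICore V d r ρ (Glev V d ρ H (r-1))).filter (fun e => e ⊆ S)).Nonempty
            then w else 0))
          (fun i _ => by split; exacts [hw0, le_refl _])
          (Finset.mem_Icc.mpr ⟨hr1, hrd⟩)
        rw [h1] at hs
        exact hs
      have h3 : (0:ℝ) ≤
          (if ((Glev V d ρ H d).filter (fun e => e ⊆ S)).Nonempty then w else 0) := by
        split
        · exact hw0
        · exact le_refl _
      linarith
  · rw [if_neg hne]
    have h2 : (0:ℝ) ≤ ∑ r ∈ Finset.Icc 1 d,
        (if ((ICore V d r ρ (Glev V d ρ H (r-1))).filter (fun e => e ⊆ S)).Nonempty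
          then w else 0) := by
      apply Finset.sum_nonneg
      intro i _
      split
      · exact hw0
      · exact le_refl _
    have h3 : (0:ℝ) ≤
        (if ((Glev V d ρ H d).filter (fun e => e ⊆ S)).Nonempty then w else 0) := by
      split
      · exact hw0
      · exact le_refl _
    linarith

end Aux

/-- Critical depth lemma. -/
theorem stmt14 :
    ∀ (d : ℕ), 0 < d → ∀ c : ℝ, 0 < c → ∀ p : ℝ, p ∈ Set.Ioo (0:ℝ) 1 →
      ∀ (V : Type) [Fintype V] [DecidableEq V]
        (H : Finset (Finset V)), (∀ e ∈ H, e.card = d) →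
        (∃ H' ⊆ H, branching V H' (c / p) ∧
          hitp V p H / ((d : ℝ) + 1) ≤ hitp V p H') ∨
        (∃ r : ℕ, 1 ≤ r ∧ r ≤ d ∧
          ∃ I : Finset (Finset V), (∀ e ∈ I, e.card = d - r) ∧
            ∃ H' ⊆ H,
              (∀ e ∈ I, (c / p)^r ≤ ((H'.filter (fun e' => e ⊆ e')).card : ℝ)) ∧
              (∀ e ∈ I, ∀ A : Finset V, A.Nonempty → Disjoint A e →
                ((H'.filter (fun e' => e ∪ A ⊆ e')).card : ℝ) ≤
                  (c / p) ^ ((r : ℤ) - (A.card : ℤ))) ∧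
              hitp V p H / ((d : ℝ) + 1) ≤ hitp V p I) := by
  intro d hd c hc p hp V _ _ H hH
  classical
  set ρ : ℝ := c / p with hρdef
  have hρ : 0 < ρ := div_pos hc hp.1
  set q : ℝ := hitp V p H / ((d : ℝ) + 1) with hq
  have hd1 : (0:ℝ) < (d : ℝ) + 1 := by positivity
  have hHq : hitp V p H = ((d : ℝ) + 1) * q := by
    rw [hq]; field_simp
  by_cases h0 : q ≤ hitp V p (Glev V d ρ H d)
  · left
    exact ⟨Glev V d ρ H d, Glev_subset d, branching_Glev hρ hH, h0⟩
  · right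
    push_neg at h0
    have hsum := hitp_decomp (d := d) (ρ := ρ) hp (H := H)
    have hbig : (d : ℝ) * q <
        ∑ r ∈ Finset.Icc 1 d, hitp V p (ICore V d r ρ (Glev V d ρ H (r-1))) := by
      nlinarith [hsum, h0, hHq]
    -- there must be a good level r
    have hex : ∃ r ∈ Finset.Icc 1 d,
        q ≤ hitp V p (ICore V d r ρ (Glev V d ρ H (r-1))) := by
      by_contra hcon
      push_neg at hcon
      have hlt : ∑ r ∈ Finset.Icc 1 d, hitp V p (ICore V d r ρ (Glev V d ρ H (r-1))) <
          ∑ _r ∈ Finset.Icc 1 d, q := by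
        apply Finset.sum_lt_sum_of_nonempty
        · exact ⟨1, Finset.mem_Icc.mpr ⟨le_refl 1, hd⟩⟩
        · intro i hi
          exact hcon i hi
      rw [Finset.sum_const] at hlt
      simp only [Nat.card_Icc, Nat.add_sub_cancel, nsmul_eq_mul] at hlt
      linarith
    obtain ⟨r, hr, hrq⟩ := hex
    rw [Finset.mem_Icc] at hr
    refine ⟨r, hr.1, hr.2, ICore V d r ρ (Glev V d ρ H (r-1)),
      fun e heI => (mem_ICore.mp heI).1,
      Glev V d ρ H (r-1), Glev_subset (r-1), ?_, ?_, hrq⟩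
    · intro e heI
      exact (mem_ICore.mp heI).2
    · intro e heI A hA hdisj
      exact cond2 hρ hH hr.1 hr.2 heI hA hdisj
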